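/- Let w, x, y ∈ X with (w,x) ∈ Γ_φ and (x,y) ∈ Γ_φ. Let γ₋ : [−d(w,x), 0] → X satisfy γ₋(−d(w,x)) = w, γ₋(0) = x and d(γ₋(s), γ₋(t)) = t − s for all s ≤ t in its domain, and let γ₊ : [0, d(x,y)] → X satisfy γ₊(0) = x, γ₊(d(x,y)) = y and d(γ₊(s), γ₊(t)) = t − s for all s ≤ t in its domain. Define the concatenation γ : [−d(w,x), d(x,y)] → X by γ := γ₋ on [−d(w,x),0] and γ := γ₊ on [0, d(x,y)]. Then φ(γ(t)) − φ(γ(s)) = t − s for all s ≤ t in [−d(w,x), d(x,y)]; in particular d(γ(s), γ(t)) = t − s for all such s ≤ t (so γ is a unit-speed minimal geodesic from w to y) and (γ(s), γ(t)) ∈ Γ_φ for all s ≤ t. -/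
import Mathlib


/-- Concatenation of two unit-speed minimal geodesics, from `w` to `x` and from `x` to `y`,
where `(w,x)` and `(x,y)` belong to `Γ_φ`, is again a unit-speed minimal geodesic along which
`φ` increases with unit speed; in particular all its ordered pairs belong to `Γ_φ`. -/
theorem stmt_1 {X : Type*} (d : X → X → ℝ)
    (hd_nonneg : ∀ x y, 0 ≤ d x y)
    (hd_refl : ∀ x, d x x = 0)
    (hd_tri : ∀ x y z, d x y ≤ d x z + d z y)
    (φ : X → ℝ) (hφ : ∀ x y, φ y - φ x ≤ d x y)
    (w x y : X)
    (hwx : φ x - φ w = d w x) (hxy : φ y - φ x = d x y)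
    (γm γp γ : ℝ → X)
    (hγm_w : γm (-(d w x)) = w) (hγm_x : γm 0 = x)
    (hγm : ∀ s t : ℝ, -(d w x) ≤ s → s ≤ t → t ≤ 0 → d (γm s) (γm t) = t - s)
    (hγp_x : γp 0 = x) (hγp_y : γp (d x y) = y)
    (hγp : ∀ s t : ℝ, 0 ≤ s → s ≤ t → t ≤ d x y → d (γp s) (γp t) = t - s)
    (hγ : ∀ t : ℝ, γ t = if t ≤ 0 then γm t else γp t) :
    ∀ s t : ℝ, -(d w x) ≤ s → s ≤ t → t ≤ d x y →
      φ (γ t) - φ (γ s) = t - s ∧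
      d (γ s) (γ t) = t - s ∧
      φ (γ t) - φ (γ s) = d (γ s) (γ t) := by
  intro s t hs hst ht
  have hm : ∀ u : ℝ, -(d w x) ≤ u → u ≤ 0 → φ (γm u) = φ x + u := by
    intro u h1 h2
    have a := hφ (γm u) (γm 0)
    rw [hγm u 0 h1 h2 le_rfl, hγm_x] at a
    have b := hφ (γm (-(d w x))) (γm u)
    rw [hγm _ u le_rfl h1 h2, hγm_w] at b
    linarith
  have hp : ∀ u : ℝ, 0 ≤ u → u ≤ d x y → φ (γp u) = φ x + u := by
    intro u h1 h2
    have a := hφ (γp 0) (γp u)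
    rw [hγp 0 u le_rfl h1 h2, hγp_x] at a
    have b := hφ (γp u) (γp (d x y))
    rw [hγp u _ h1 h2 le_rfl, hγp_y] at b
    linarith
  have hφγ : ∀ u : ℝ, -(d w x) ≤ u → u ≤ d x y → φ (γ u) = φ x + u := by
    intro u h1 h2
    rw [hγ u]
    split
    · exact hm u h1 ‹u ≤ 0›
    · exact hp u (le_of_not_ge ‹¬ u ≤ 0›) h2
  have hφd : φ (γ t) - φ (γ s) = t - s := by
    rw [hφγ s hs (hst.trans ht), hφγ t (hs.trans hst) ht]; ring
  have hdle : d (γ s) (γ t) ≤ t - s := by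
    rw [hγ s, hγ t]
    by_cases h1 : s ≤ 0 <;> by_cases h2 : t ≤ 0 <;> simp only [h1, h2, if_true, if_false, if_pos, if_neg, not_false_iff]
    · exact le_of_eq (hγm s t hs hst h2)
    · have e1 := hγm s 0 hs h1 le_rfl
      have e2 := hγp 0 t le_rfl (le_of_not_ge h2) ht
      have e3 : γm 0 = γp 0 := by rw [hγm_x, hγp_x]
      have tri := hd_tri (γm s) (γp t) (γm 0)
      rw [e3] at e1 tri
      linarith
    · exact absurd (hst.trans h2) h1
    · exact le_of_eq (hγp s t (le_of_not_ge h1) hst ht)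
  have hdge := hφ (γ s) (γ t)
  refine ⟨hφd, le_antisymm hdle (by linarith), by linarith⟩
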